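/- arXiv:1609.03635 — 2 statements merged into one kernel-verified Lean document; each statement's English description precedes it below -/
import Mathlib

section
/- Under Assumption A with Alg(T; R_K M) semi-admissible, if the forgetful functor U preserves right Bousfield localization (every T(K)-colocal equivalence with T(K)-colocal domain is sent to a K-colocal equivalence with K-colocal domain), then for each T-algebra X the cofibrant replacement R_{T(K)}X → X in R_{T(K)} Alg(T;M) exhibits a T-algebra X̃ = R_{T(K)}X such that U(X̃) is weakly equivalent in M to R_K U X; the weak equivalence is obtained as a lift β : U R_{T(K)}X → R_K U X of Uc_X through the trivial fibration q : R_K U X → U X in R_K M, and β is a weak equivalence in M by 2-out-of-3 and the fact that K-colocal equivalences between K-colocal objects are M-weak equivalences. -/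
open CategoryTheory CategoryTheory.Limits

universe w v u

/-- A (semi-)model structure datum: three classes of maps, with the weak
equivalences satisfying 2-out-of-3, cofibrations characterized by the left
lifting property against trivial fibrations, trivial cofibrations lifting
against fibrations, and the two factorization axioms. -/
structure ModelStr (M : Type u) [Category.{v} M] where
  W : MorphismProperty M
  Fib : MorphismProperty M
  Cof : MorphismProperty M
  w_comp : ∀ {X Y Z : M} (f : X ⟶ Y) (g : Y ⟶ Z), W f → W g → W (f ≫ g)
  w_cancel_left : ∀ {X Y Z : M} (f : X ⟶ Y) (g : Y ⟶ Z), W g → W (f ≫ g) → W f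
  w_cancel_right : ∀ {X Y Z : M} (f : X ⟶ Y) (g : Y ⟶ Z), W f → W (f ≫ g) → W g
  cof_iff : ∀ {A B : M} (i : A ⟶ B), Cof i ↔
    ∀ {X Y : M} (p : X ⟶ Y), Fib p → W p → HasLiftingProperty i p
  tcof_llp : ∀ {A B X Y : M} (i : A ⟶ B) (p : X ⟶ Y),
    Cof i → W i → Fib p → HasLiftingProperty i p
  fact_cof_tfib : ∀ {X Y : M} (f : X ⟶ Y),
    ∃ (Z : M) (i : X ⟶ Z) (p : Z ⟶ Y), Cof i ∧ Fib p ∧ W p ∧ i ≫ p = f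
  fact_tcof_fib : ∀ {X Y : M} (f : X ⟶ Y),
    ∃ (Z : M) (i : X ⟶ Z) (p : Z ⟶ Y), Cof i ∧ W i ∧ Fib p ∧ i ≫ p = f

/-- An object is cofibrant if the map from the initial object is a cofibration. -/
def ModelStr.Cofibrant {M : Type u} [Category.{v} M] [HasInitial M]
    (S : ModelStr M) (X : M) : Prop := S.Cof (initial.to X)

/-- An object is fibrant if the map to the terminal object is a fibration. -/
def ModelStr.Fibrant {M : Type u} [Category.{v} M] [HasTerminal M]
    (S : ModelStr M) (X : M) : Prop := S.Fib (terminal.from X)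

/-- if the forgetful functor preserves right Bousfield
localization (every `T(K)`-colocal equivalence with `T(K)`-colocal domain is
sent to a `K`-colocal equivalence with `K`-colocal domain), then for each
`T`-algebra `X` the cofibrant replacement `c_X : R_{T(K)}X → X` in
`R_{T(K)} Alg(T;M)` gives a `T`-algebra `X̃ = R_{T(K)}X` whose underlying
object is weakly equivalent in `M` to `R_K U X`: `U c_X` lifts through the
trivial fibration `q : R_K U X → U X` to a map `β` which is a weak
equivalence in `M`. -/
theorem rk_preserves_algebras_of_forget_preserves {M : Type u}
    [Category.{v} M] [HasInitial M] (T : Monad M) [HasInitial T.Algebra]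
    (SM : ModelStr M)  -- the model structure on M
    (SR : ModelStr M)  -- the right Bousfield localization R_K M
    (hFibR : SR.Fib = SM.Fib)
    (SA : ModelStr T.Algebra)   -- Alg(T;M), transferred from M
    (hWA : ∀ {A B : T.Algebra} (f : A ⟶ B), SA.W f ↔ SM.W f.f)
    (hFibA : ∀ {A B : T.Algebra} (f : A ⟶ B), SA.Fib f ↔ SM.Fib f.f)
    (SAR : ModelStr T.Algebra)  -- Alg(T; R_K M) = R_{T(K)} Alg(T;M)
    (hWAR : ∀ {A B : T.Algebra} (f : A ⟶ B), SAR.W f ↔ SR.W f.f)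
    (hFibAR : ∀ {A B : T.Algebra} (f : A ⟶ B), SAR.Fib f ↔ SR.Fib f.f)
    -- U preserves right Bousfield localization
    (hU : ∀ {X' X : T.Algebra} (c : X' ⟶ X), SAR.W c → SAR.Cofibrant X' →
      SR.W c.f ∧ SR.Cofibrant X'.A)
    -- cofibrant replacement in R_{T(K)} Alg(T;M)
    (RTK : T.Algebra → T.Algebra) (cX : ∀ X : T.Algebra, RTK X ⟶ X)
    (hRTKc : ∀ X, SAR.Cofibrant (RTK X))
    (hRTKf : ∀ X, SAR.Fib (cX X)) (hRTKw : ∀ X, SAR.W (cX X))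
    -- functorial cofibrant replacement in R_K M
    (RK : M → M) (q : ∀ A : M, RK A ⟶ A)
    (hRKc : ∀ A, SR.Cofibrant (RK A))
    (hRKf : ∀ A, SR.Fib (q A)) (hRKw : ∀ A, SR.W (q A))
    -- a K-colocal equivalence between K-colocal objects is a weak equivalence in M
    (hHirsch : ∀ {A B : M} (f : A ⟶ B),
      SR.W f → SR.Cofibrant A → SR.Cofibrant B → SM.W f)
    (X : T.Algebra) :
    ∃ β : (RTK X).A ⟶ RK X.A, β ≫ q X.A = (cX X).f ∧ SM.W β := by
  obtain ⟨hWc, hCofc⟩ := hU (cX X) (hRTKw X) (hRTKc X)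
  have hlift : HasLiftingProperty (initial.to (RTK X).A) (q X.A) :=
    (SR.cof_iff _).1 hCofc (q X.A) (hRKf _) (hRKw _)
  have hsq : initial.to (RK X.A) ≫ q X.A = initial.to (RTK X).A ≫ (cX X).f := by
    apply Subsingleton.elim (α := (⊥_ M ⟶ X.A))
  have sq : CommSq (initial.to (RK X.A)) (initial.to (RTK X).A) (q X.A) (cX X).f :=
    CommSq.mk hsq
  refine ⟨sq.lift, sq.fac_right, ?_⟩
  have hWβ : SR.W sq.lift :=
    SR.w_cancel_left sq.lift (q X.A) (hRKw _) (by rw [sq.fac_right]; exact hWc)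
  exact hHirsch sq.lift hWβ hCofc (hRKc _)
end

section
/- An object that is a finite colimit of objects each finite with respect to a saturated class C of maps (i.e., the corepresentable functors commute with transfinite compositions of maps in C) is itself finite with respect to C. -/
open CategoryTheory CategoryTheory.Limits

universe v u

variable {M : Type u} [Category.{v} M]

/-- A class of maps is saturated if it is closed under retracts, pushouts
(cobase change), and transfinite compositions. -/
def SaturatedClass (Cs : MorphismProperty M) : Prop :=
  (∀ {A B X Y : M} (f : A ⟶ B) (g : X ⟶ Y)
      (i : A ⟶ X) (r : X ⟶ A) (j : B ⟶ Y) (s : Y ⟶ B),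
      i ≫ r = 𝟙 A → j ≫ s = 𝟙 B → f ≫ j = i ≫ g → g ≫ s = r ≫ f →
      Cs g → Cs f) ∧
  (∀ {Z X Y P : M} (f : Z ⟶ X) (g : Z ⟶ Y) (inl : X ⟶ P) (inr : Y ⟶ P),
      IsPushout f g inl inr → Cs f → Cs inr) ∧
  (∀ (J : Type v) [LinearOrder J] [OrderBot J] (F : J ⥤ M) (c : Cocone F),
      IsColimit c → (∀ (i j : J) (h : i ≤ j), Cs (F.map (homOfLE h))) →
      Cs (c.ι.app ⊥))

/-- An object `X` is finite with respect to a class `Cs` of maps if the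
corepresentable functor `Hom(X, -)` sends colimits of (transfinite) chains of
maps in `Cs` to colimits, i.e. maps out of `X` into such a colimit factor
through some stage, compatibly. -/
def CFinite (Cs : MorphismProperty M) (X : M) : Prop :=
  ∀ (J : Type v) [LinearOrder J] [OrderBot J] (F : J ⥤ M) (c : Cocone F),
    IsColimit c → (∀ (i j : J) (h : i ≤ j), Cs (F.map (homOfLE h))) →
    Nonempty (IsColimit ((coyoneda.obj (Opposite.op X)).mapCocone c))

/-- a finite colimit of objects, each finite with respect to a
saturated class `Cs`, is itself finite with respect to `Cs`. -/
theorem cFinite_of_finite_colimit (Cs : MorphismProperty M)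
    (hsat : SaturatedClass Cs)
    (J : Type) [SmallCategory J] [FinCategory J]
    (F : J ⥤ M) (c : Cocone F) (hc : IsColimit c)
    (hfin : ∀ j : J, CFinite Cs (F.obj j)) : CFinite Cs c.pt := by
  intro J' _ _ G c' hc' hCs
  classical
  -- a colimit cocone of `Hom(F.obj j, -)` applied to `c'`, for each `j`
  have hj : ∀ j : J, IsColimit ((coyoneda.obj (Opposite.op (F.obj j))).mapCocone c') :=
    fun j => (hfin j J' G c' hc' hCs).some
  -- helper: pushing equalities forward along the chain
  have push : ∀ {p q r : J'} (hpq : p ≤ q) (hqr : q ≤ r) {A : M} {u v : A ⟶ G.obj p},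
      u ≫ G.map (homOfLE hpq) = v ≫ G.map (homOfLE hpq) →
      u ≫ G.map (homOfLE (hpq.trans hqr)) = v ≫ G.map (homOfLE (hpq.trans hqr)) := by
    intro p q r hpq hqr A u v h
    rw [← homOfLE_comp hpq hqr, G.map_comp, ← Category.assoc, h, Category.assoc]
  refine ⟨Types.FilteredColimit.isColimitOf _ _ ?_ ?_⟩
  · -- joint surjectivity
    intro x
    -- for each `j`, factor `c.ι.app j ≫ x` through some stage
    choose idx f hf using fun j : J =>
      Types.jointly_surjective _ (hj j) (c.ι.app j ≫ x)
    set i0 : J' := Finset.univ.sup idx with hi0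
    have hidx : ∀ j : J, idx j ≤ i0 := fun j => Finset.le_sup (Finset.mem_univ j)
    set g : ∀ j : J, F.obj j ⟶ G.obj i0 := fun j => f j ≫ G.map (homOfLE (hidx j)) with hgdef
    have hg : ∀ j : J, g j ≫ c'.ι.app i0 = c.ι.app j ≫ x := by
      intro j
      have := hf j
      dsimp at this
      rw [hgdef]
      dsimp
      rw [Category.assoc, c'.w (homOfLE (hidx j))]
      exact this
    -- for each morphism of `J`, the factorizations eventually agree
    have key : ∀ p : (Σ a : J, Σ b : J, a ⟶ b), ∃ (l : J') (hl : i0 ≤ l),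
        F.map p.2.2 ≫ g p.2.1 ≫ G.map (homOfLE hl) = g p.1 ≫ G.map (homOfLE hl) := by
      intro p
      obtain ⟨a, b, φ⟩ := p
      have heq : ((coyoneda.obj (Opposite.op (F.obj a))).mapCocone c').ι.app i0
            (F.map φ ≫ g b) =
          ((coyoneda.obj (Opposite.op (F.obj a))).mapCocone c').ι.app i0 (g a) := by
        dsimp
        rw [Category.assoc, hg b, hg a, ← Category.assoc, c.w φ]
      obtain ⟨k, u, w, huw⟩ :=
        (Types.FilteredColimit.isColimit_eq_iff _ (hj a)).mp heq
      have hle : i0 ≤ k := leOfHom u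
      refine ⟨k, hle, ?_⟩
      have hu : u = homOfLE hle := Subsingleton.elim _ _
      have hw : w = homOfLE hle := Subsingleton.elim _ _
      dsimp at huw
      rw [hu, hw] at huw
      simpa only [hgdef, Category.assoc] using huw
    choose l hl heq using key
    set L : J' := i0 ⊔ Finset.univ.sup l with hL
    have hiL : i0 ≤ L := le_sup_left
    have hlL : ∀ p, l p ≤ L :=
      fun p => le_trans (Finset.le_sup (Finset.mem_univ p)) le_sup_right
    -- assemble a cocone on `F` with apex `G.obj L`
    have natural : ∀ {a b : J} (φ : a ⟶ b),
        F.map φ ≫ g b ≫ G.map (homOfLE hiL) = g a ≫ G.map (homOfLE hiL) := by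
      intro a b φ
      have := push (hl ⟨a, b, φ⟩) (hlL ⟨a, b, φ⟩)
        (u := F.map φ ≫ g b) (v := g a) (by
          rw [Category.assoc]; exact heq ⟨a, b, φ⟩)
      rw [Category.assoc] at this
      have h1 : (hl ⟨a, b, φ⟩).trans (hlL ⟨a, b, φ⟩) = hiL := rfl
      convert this using 3
    set s : Cocone F :=
      { pt := G.obj L
        ι := { app := fun j => g j ≫ G.map (homOfLE hiL)
               naturality := fun a b φ => by
                 dsimp
                 rw [Category.comp_id, ← Category.assoc]
                 rw [Category.assoc]
                 exact natural φ } } with hs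
    refine ⟨L, hc.desc s, ?_⟩
    have : x = hc.desc s ≫ c'.ι.app L := by
      apply hc.hom_ext
      intro j
      rw [← Category.assoc, hc.fac s j]
      show c.ι.app j ≫ x = (g j ≫ G.map (homOfLE hiL)) ≫ c'.ι.app L
      rw [Category.assoc, Category.assoc, c'.w (homOfLE hiL), ← Category.assoc, hg j]
    exact this
  · -- eventual injectivity
    intro i1 i2 x1 x2 h12
    set k0 : J' := i1 ⊔ i2 with hk0
    set y1 : c.pt ⟶ G.obj k0 := x1 ≫ G.map (homOfLE le_sup_left) with hy1
    set y2 : c.pt ⟶ G.obj k0 := x2 ≫ G.map (homOfLE le_sup_right) with hy2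
    have hy : y1 ≫ c'.ι.app k0 = y2 ≫ c'.ι.app k0 := by
      rw [hy1, hy2, Category.assoc, Category.assoc,
        c'.w (homOfLE (le_sup_left : i1 ≤ k0)), c'.w (homOfLE (le_sup_right : i2 ≤ k0))]
      dsimp at h12
      exact h12
    have key : ∀ j : J, ∃ (l : J') (hl : k0 ≤ l),
        (c.ι.app j ≫ y1) ≫ G.map (homOfLE hl) = (c.ι.app j ≫ y2) ≫ G.map (homOfLE hl) := by
      intro j
      have heq : ((coyoneda.obj (Opposite.op (F.obj j))).mapCocone c').ι.app k0
            (c.ι.app j ≫ y1) =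
          ((coyoneda.obj (Opposite.op (F.obj j))).mapCocone c').ι.app k0 (c.ι.app j ≫ y2) := by
        show (c.ι.app j ≫ y1) ≫ c'.ι.app k0 = (c.ι.app j ≫ y2) ≫ c'.ι.app k0
        simp only [Category.assoc]
        exact congrArg (fun t => c.ι.app j ≫ t) hy
      obtain ⟨k, u, w, huw⟩ :=
        (Types.FilteredColimit.isColimit_eq_iff _ (hj j)).mp heq
      have hle : k0 ≤ k := leOfHom u
      have hu : u = homOfLE hle := Subsingleton.elim _ _
      have hw : w = homOfLE hle := Subsingleton.elim _ _
      dsimp at huw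
      rw [hu, hw] at huw
      exact ⟨k, hle, huw⟩
    choose l hl heq using key
    set L : J' := k0 ⊔ Finset.univ.sup l with hL
    have hkL : k0 ≤ L := le_sup_left
    have hlL : ∀ j, l j ≤ L :=
      fun j => le_trans (Finset.le_sup (Finset.mem_univ j)) le_sup_right
    have h1L : i1 ≤ L := le_trans le_sup_left hkL
    have h2L : i2 ≤ L := le_trans le_sup_right hkL
    refine ⟨L, homOfLE h1L, homOfLE h2L, ?_⟩
    show x1 ≫ G.map (homOfLE h1L) = x2 ≫ G.map (homOfLE h2L)
    apply hc.hom_ext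
    intro j
    have := push (hl j) (hlL j) (heq j)
    have e1 : c.ι.app j ≫ x1 ≫ G.map (homOfLE h1L) =
        (c.ι.app j ≫ y1) ≫ G.map (homOfLE ((hl j).trans (hlL j))) := by
      rw [hy1]
      rw [← homOfLE_comp (le_sup_left : i1 ≤ k0) hkL, G.map_comp]
      simp only [Category.assoc]
    have e2 : c.ι.app j ≫ x2 ≫ G.map (homOfLE h2L) =
        (c.ι.app j ≫ y2) ≫ G.map (homOfLE ((hl j).trans (hlL j))) := by
      rw [hy2]
      rw [← homOfLE_comp (le_sup_right : i2 ≤ k0) hkL, G.map_comp]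
      simp only [Category.assoc]
    rw [← Category.assoc, ← Category.assoc, Category.assoc, Category.assoc, e1, e2, this]
end
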